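/- arXiv:1204.6445 — 4 statements merged into one kernel-verified Lean document; each statement's English description precedes it below -/
import Mathlib

section
/- For any two redundant 4×4 complex matrices M and M', φ(M M') = φ(M) φ(M'); i.e., φ is a semigroup homomorphism from redundant 4×4 matrices to 3×3 matrices under matrix multiplication. -/
open Matrix

noncomputable def A : Matrix (Fin 3) (Fin 4) ℂ :=
  !![1, 0, 0, 0; 0, 1/2, 1/2, 0; 0, 0, 0, 1]

def B : Matrix (Fin 4) (Fin 3) ℂ :=
  !![1, 0, 0; 0, 1, 0; 0, 1, 0; 0, 0, 1]

def Redundant (M : Matrix (Fin 4) (Fin 4) ℂ) : Prop :=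
  (∀ j, M 1 j = M 2 j) ∧ (∀ i, M i 1 = M i 2)

theorem phi_hom (M M' : Matrix (Fin 4) (Fin 4) ℂ)
    (hM : Redundant M) (hM' : Redundant M') :
    A * (M * M') * B = (A * M * B) * (A * M' * B) := by
  obtain ⟨h1', _⟩ := hM'
  have key : B * (A * M') = M' := by
    ext i j
    fin_cases i <;>
      simp [A, B, Matrix.mul_apply, Matrix.vecMul, dotProduct,
        Fin.sum_univ_three, Fin.sum_univ_four, h1' j] <;> ring
  conv_lhs => rw [← key]
  simp only [Matrix.mul_assoc]
end

section
/- Let λ ∈ ℂ be nonzero and not a root of unity, and let c_0, ..., c_t be nonnegative integers summing to n. Let M be the n×n block matrix M = [B_0 B_1 ⋯ B_t] where B_k is n×c_k with entry at row r and column c equal to r^{c-1}·λ^{k r} (rows and columns 1-indexed). Then M is nonsingular. -/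
open Matrix
open Polynomial

private lemma pow_ne_pow_aux {l : ℂ} (hl : l ≠ 0) (hru : ∀ m : ℕ, 0 < m → l ^ m ≠ 1)
    {a b : ℕ} (hab : a < b) : l ^ a ≠ l ^ b := by
  intro h
  have h2 : l ^ a * l ^ (b - a) = l ^ a * 1 := by
    rw [mul_one, ← pow_add, h]
    congr 1
    omega
  have := mul_left_cancel₀ (pow_ne_zero a hl) h2
  exact hru (b - a) (by omega) this

private lemma pow_ne_pow {l : ℂ} (hl : l ≠ 0) (hru : ∀ m : ℕ, 0 < m → l ^ m ≠ 1)
    {a b : ℕ} (hab : a ≠ b) : l ^ a ≠ l ^ b := by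
  rcases lt_or_gt_of_ne hab with h | h
  · exact pow_ne_pow_aux hl hru h
  · exact fun he => pow_ne_pow_aux hl hru h he.symm

private lemma comp_X_add_one_const {p : ℂ[X]} (h : p.comp (X + C 1) = p) :
    p = C (p.eval 0) := by
  have hm : ∀ m : ℕ, p.eval (m : ℂ) = p.eval 0 := by
    intro m
    induction m with
    | zero => simp
    | succ m ih =>
      have h1 : p.eval ((m : ℂ) + 1) = (p.comp (X + C 1)).eval (m : ℂ) := by
        simp [eval_comp]
      rw [h] at h1
      push_cast
      rw [h1, ih]
  have hz : p - C (p.eval 0) = 0 := by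
    apply Polynomial.eq_zero_of_infinite_isRoot
    apply Set.Infinite.mono (s := Set.range (Nat.cast : ℕ → ℂ))
    · rintro _ ⟨m, rfl⟩
      simp [Polynomial.IsRoot, hm m]
    · exact Set.infinite_range_of_injective Nat.cast_injective
  exact sub_eq_zero.mp hz

private lemma key_lemma (t : ℕ) (l : ℂ) (hl : l ≠ 0)
    (hru : ∀ m : ℕ, 0 < m → l ^ m ≠ 1) :
    ∀ n : ℕ, ∀ c : Fin (t + 1) → ℕ, ∑ k, c k = n →
    ∀ p : Fin (t + 1) → ℂ[X], (∀ k, (p k).degree < (c k : ℕ)) →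
    (∀ x : ℕ, x ∈ Finset.Icc 1 n → ∑ k, (p k).eval (x : ℂ) * l ^ ((k : ℕ) * x) = 0) →
    ∀ k, p k = 0 := by
  intro n
  induction n with
  | zero =>
    intro c hc p hdeg _ k
    have hck : c k = 0 := (Finset.sum_eq_zero_iff.mp hc) k (Finset.mem_univ k)
    have h := hdeg k
    rw [hck] at h
    rw [← Polynomial.degree_eq_bot]
    exact Nat.WithBot.lt_zero_iff.mp (by simpa using h)
  | succ n ih =>
    intro c hc p hdeg hvan
    obtain ⟨k0, _, hk0⟩ : ∃ k0 ∈ Finset.univ, c k0 ≠ 0 :=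
      Finset.exists_ne_zero_of_sum_ne_zero (by rw [hc]; exact Nat.succ_ne_zero n)
    set q : Fin (t + 1) → ℂ[X] :=
      fun k => C (l ^ (k : ℕ)) * (p k).comp (X + C 1) - C (l ^ (k0 : ℕ)) * p k with hq_def
    set c' : Fin (t + 1) → ℕ := Function.update c k0 (c k0 - 1) with hc'_def
    have hXC : (X + C (1:ℂ)).natDegree ≠ 0 := by
      rw [Polynomial.natDegree_X_add_C]; exact one_ne_zero
    have hcomplc : ∀ k, ((p k).comp (X + C 1)).leadingCoeff = (p k).leadingCoeff := by
      intro k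
      rw [Polynomial.leadingCoeff_comp hXC, Polynomial.leadingCoeff_X_add_C, one_pow, mul_one]
    have hcompdeg : ∀ k, ((p k).comp (X + C 1)).degree = (p k).degree := by
      intro k
      by_cases hp : p k = 0
      · rw [hp]; simp
      · have hcne : (p k).comp (X + C 1) ≠ 0 := by
          intro h0
          apply hp
          rw [← Polynomial.leadingCoeff_eq_zero, ← hcomplc k, h0, Polynomial.leadingCoeff_zero]
        rw [Polynomial.degree_eq_natDegree hcne, Polynomial.degree_eq_natDegree hp,
          Polynomial.natDegree_comp, Polynomial.natDegree_X_add_C, mul_one]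
    have hc' : ∑ k, c' k = n := by
      have h1 : ∑ k, c' k = (c k0 - 1) + ∑ k ∈ Finset.univ \ {k0}, c k :=
        Finset.sum_update_of_mem (Finset.mem_univ k0) c (c k0 - 1)
      have h2 : ∑ k, c k = (∑ k ∈ Finset.univ \ {k0}, c k) + c k0 :=
        (Finset.sum_eq_sum_sdiff_singleton_add (Finset.mem_univ k0) c)
      omega
    have hdeg' : ∀ k, (q k).degree < (c' k : ℕ) := by
      intro k
      by_cases hk : k = k0
      · subst hk
        have hqe : q k = C (l ^ (k : ℕ)) * ((p k).comp (X + C 1) - p k) := by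
          simp only [hq_def]
          ring
        rw [hqe]
        by_cases hp : p k = 0
        · rw [hp]
          simp only [Polynomial.zero_comp, sub_zero, mul_zero, Polynomial.degree_zero]
          exact WithBot.bot_lt_coe _
        · have hcne : (p k).comp (X + C 1) ≠ 0 := by
            intro h0
            apply hp
            rw [← Polynomial.leadingCoeff_eq_zero, ← hcomplc k, h0, Polynomial.leadingCoeff_zero]
          have hsub : ((p k).comp (X + C 1) - p k).degree < (p k).degree := by
            have := Polynomial.degree_sub_lt (hcompdeg k) hcne (hcomplc k)
            rwa [hcompdeg k] at this
          calc (C (l ^ (k : ℕ)) * ((p k).comp (X + C 1) - p k)).degree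
              ≤ ((p k).comp (X + C 1) - p k).degree := by
                apply le_trans (Polynomial.degree_mul_le _ _)
                rw [Polynomial.degree_C (pow_ne_zero _ hl), zero_add]
            _ < (p k).degree := hsub
            _ ≤ ((c k - 1 : ℕ) : WithBot ℕ) := by
                rw [Polynomial.degree_eq_natDegree hp]
                exact_mod_cast Nat.le_sub_one_of_lt (by
                  have h := hdeg k
                  rw [Polynomial.degree_eq_natDegree hp] at h
                  exact_mod_cast h)
            _ = ((c' k : ℕ) : WithBot ℕ) := by
                simp [hc'_def, Function.update_self]
      · have hck' : c' k = c k := by simp [hc'_def, Function.update_of_ne hk]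
        rw [hck']
        apply lt_of_le_of_lt (Polynomial.degree_sub_le _ _)
        rw [max_lt_iff]
        constructor
        · apply lt_of_le_of_lt (Polynomial.degree_mul_le _ _)
          calc (C (l ^ (k : ℕ))).degree + ((p k).comp (X + C 1)).degree
              ≤ 0 + (p k).degree := by
                rw [hcompdeg k]
                exact add_le_add_left Polynomial.degree_C_le _
            _ = (p k).degree := by rw [zero_add]
            _ < (c k : ℕ) := hdeg k
        · apply lt_of_le_of_lt (Polynomial.degree_mul_le _ _)
          calc (C (l ^ (k0 : ℕ))).degree + (p k).degree
              ≤ 0 + (p k).degree := add_le_add_left Polynomial.degree_C_le _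
            _ = (p k).degree := by rw [zero_add]
            _ < (c k : ℕ) := hdeg k
    have hvan' : ∀ x : ℕ, x ∈ Finset.Icc 1 n →
        ∑ k, (q k).eval (x : ℂ) * l ^ ((k : ℕ) * x) = 0 := by
      intro x hx
      rw [Finset.mem_Icc] at hx
      have h1 := hvan (x + 1) (Finset.mem_Icc.mpr ⟨by omega, by omega⟩)
      have h2 := hvan x (Finset.mem_Icc.mpr ⟨by omega, by omega⟩)
      have hstep : ∑ k, (q k).eval (x : ℂ) * l ^ ((k : ℕ) * x)
          = (∑ k, (p k).eval ((x + 1 : ℕ) : ℂ) * l ^ ((k : ℕ) * (x + 1)))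
            - l ^ (k0 : ℕ) * ∑ k, (p k).eval (x : ℂ) * l ^ ((k : ℕ) * x) := by
        rw [Finset.mul_sum, ← Finset.sum_sub_distrib]
        apply Finset.sum_congr rfl
        intro k _
        have hpow : l ^ ((k : ℕ) * (x + 1)) = l ^ ((k : ℕ)) * l ^ ((k : ℕ) * x) := by
          rw [← pow_add]
          congr 1
          ring
        simp only [hq_def, Polynomial.eval_sub, Polynomial.eval_mul, Polynomial.eval_C,
          Polynomial.eval_comp, Polynomial.eval_add, Polynomial.eval_X, Polynomial.eval_one]
        push_cast
        rw [hpow]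
        ring
      rw [hstep, h1, h2, mul_zero, sub_zero]
    have hq0 : ∀ k, q k = 0 := ih c' hc' q hdeg' hvan'
    have hpk : ∀ k, k ≠ k0 → p k = 0 := by
      intro k hk
      by_contra hp
      have heq : C (l ^ (k : ℕ)) * (p k).comp (X + C 1) = C (l ^ (k0 : ℕ)) * p k :=
        sub_eq_zero.mp (hq0 k)
      have hlceq := congrArg Polynomial.leadingCoeff heq
      rw [Polynomial.leadingCoeff_mul, Polynomial.leadingCoeff_mul,
        Polynomial.leadingCoeff_C, Polynomial.leadingCoeff_C, hcomplc k] at hlceq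
      have := mul_right_cancel₀ (Polynomial.leadingCoeff_ne_zero.mpr hp) hlceq
      exact pow_ne_pow hl hru (fun h => hk (Fin.val_injective h)) this
    have hcomp : (p k0).comp (X + C 1) = p k0 := by
      have heq : C (l ^ (k0 : ℕ)) * (p k0).comp (X + C 1) = C (l ^ (k0 : ℕ)) * p k0 :=
        sub_eq_zero.mp (hq0 k0)
      exact mul_left_cancel₀
        (by simp only [ne_eq, Polynomial.C_eq_zero]; exact pow_ne_zero _ hl) heq
    have hconst : p k0 = C ((p k0).eval 0) := comp_X_add_one_const hcomp
    have heval1 := hvan 1 (Finset.mem_Icc.mpr ⟨le_refl 1, by omega⟩)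
    rw [Finset.sum_eq_single k0 (fun k _ hk => by rw [hpk k hk]; simp)
      (fun h => absurd (Finset.mem_univ k0) h)] at heval1
    have ha : (p k0).eval 0 = 0 := by
      rw [hconst] at heval1
      simp only [Polynomial.eval_C, Nat.cast_one, mul_eq_zero] at heval1
      rcases heval1 with h | h
      · exact h
      · exact absurd h (pow_ne_zero _ hl)
    intro k
    by_cases hk : k = k0
    · rw [hk, hconst, ha, map_zero]
    · exact hpk k hk


/-- Lemma: the block-Vandermonde-type matrix `[B_0 B_1 ⋯ B_t]`, where block `B_k`
has `c k` columns and its entry at (1-indexed) row `r` and column `c` is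
`r^(c-1) * λ^(k*r)`, is nonsingular when `λ ≠ 0` is not a root of unity.
Columns are indexed by the sigma type of blocks via an arbitrary bijection
with `Fin n` (nonsingularity is invariant under column permutation). -/
theorem block_vandermonde_nonsingular (n t : ℕ) (hn : 0 < n)
    (c : Fin (t + 1) → ℕ) (hc : ∑ k, c k = n)
    (l : ℂ) (hl : l ≠ 0) (hru : ∀ m : ℕ, 0 < m → l ^ m ≠ 1)
    (e : Fin n ≃ (k : Fin (t + 1)) × Fin (c k)) :
    (Matrix.of fun r j : Fin n =>
        (((r : ℕ) + 1 : ℂ)) ^ ((e j).2 : ℕ) * l ^ (((e j).1 : ℕ) * ((r : ℕ) + 1))).det ≠ 0 := by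
  intro hdet
  obtain ⟨v, hv0, hv⟩ := (Matrix.exists_mulVec_eq_zero_iff).mpr hdet
  set p : Fin (t + 1) → ℂ[X] :=
    fun k => ∑ c' : Fin (c k), C (v (e.symm ⟨k, c'⟩)) * X ^ (c' : ℕ) with hp_def
  have hdeg : ∀ k, (p k).degree < ((c k : ℕ) : WithBot ℕ) := by
    intro k
    apply lt_of_le_of_lt (Polynomial.degree_sum_le _ _)
    refine (Finset.sup_lt_iff (WithBot.bot_lt_coe (c k))).mpr ?_
    intro c' _
    apply lt_of_le_of_lt (Polynomial.degree_C_mul_X_pow_le _ _)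
    exact Nat.cast_lt.mpr c'.isLt
  have hvan : ∀ x : ℕ, x ∈ Finset.Icc 1 n →
      ∑ k, (p k).eval (x : ℂ) * l ^ ((k : ℕ) * x) = 0 := by
    intro x hx
    rw [Finset.mem_Icc] at hx
    set r : Fin n := ⟨x - 1, by omega⟩ with hr_def
    have hxr : (r : ℕ) + 1 = x := by simp only [hr_def]; omega
    have hrx : ((r : ℕ) : ℂ) + 1 = (x : ℂ) := by exact_mod_cast hxr
    have hrow := congrFun hv r
    simp only [Matrix.mulVec, dotProduct, Pi.zero_apply, Matrix.of_apply] at hrow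
    have hre : (∑ j : Fin n,
        ((((r : ℕ) : ℂ) + 1) ^ ((e j).2 : ℕ) * l ^ (((e j).1 : ℕ) * ((r : ℕ) + 1))) * v j)
        = ∑ s : (k : Fin (t + 1)) × Fin (c k),
          ((((r : ℕ) : ℂ) + 1) ^ ((s.2 : ℕ)) * l ^ ((s.1 : ℕ) * ((r : ℕ) + 1))) * v (e.symm s) := by
      apply Fintype.sum_equiv e
      intro j
      simp
    rw [hre, ← Finset.univ_sigma_univ, Finset.sum_sigma] at hrow
    have hx1 : x - 1 + 1 = x := by omega
    have hx2 : ((x - 1 : ℕ) : ℂ) + 1 = (x : ℂ) := by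
      rw [Nat.cast_sub hx.1]
      ring
    refine Eq.trans ?_ hrow
    apply Finset.sum_congr rfl
    intro k _
    simp only [hp_def, Polynomial.eval_finset_sum, Polynomial.eval_mul, Polynomial.eval_C,
      Polynomial.eval_pow, Polynomial.eval_X]
    rw [Finset.sum_mul]
    apply Finset.sum_congr rfl
    intro c' _
    rw [hx1, hx2]
    ring
  have hp0 := key_lemma t l hl hru n c hc p hdeg hvan
  apply hv0
  funext j
  have hcoeff := congrArg (fun q => Polynomial.coeff q ((e j).2 : ℕ)) (hp0 (e j).1)
  simp only [hp_def, Polynomial.finset_sum_coeff, Polynomial.coeff_C_mul,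
    Polynomial.coeff_X_pow, Polynomial.coeff_zero, mul_ite, mul_one, mul_zero] at hcoeff
  rw [Finset.sum_eq_single ((e j).2)] at hcoeff
  · simp only [if_pos rfl] at hcoeff
    have hj : e.symm (e j) = j := e.symm_apply_apply j
    rw [show (⟨(e j).1, (e j).2⟩ : (k : Fin (t + 1)) × Fin (c k)) = e j from rfl, hj] at hcoeff
    exact hcoeff
  · intro b _ hb
    rw [if_neg (fun h => hb (Fin.val_injective h.symm))]
  · intro h
    exact absurd (Finset.mem_univ _) h
end

section
/- For every complex 2×2 matrix T, det(φ(T^{⊗2})) = (det T)^3, where φ(M) = A M B with A and B as given. -/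
open Matrix

/-- Indexing of `Fin 4` by pairs of bits, ordered 00, 01, 10, 11. -/
def bits : Fin 4 → Fin 2 × Fin 2 := ![(0, 0), (0, 1), (1, 0), (1, 1)]

/-- The Kronecker square `T ⊗ T` as a 4×4 matrix with rows/columns ordered 00,01,10,11. -/
def kron2 (T : Matrix (Fin 2) (Fin 2) ℂ) : Matrix (Fin 4) (Fin 4) ℂ :=
  Matrix.of fun i j => T (bits i).1 (bits j).1 * T (bits i).2 (bits j).2

theorem det_phi_kron2 (T : Matrix (Fin 2) (Fin 2) ℂ) :
    (A * kron2 T * B).det = T.det ^ 3 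
:= by
  have h : A * kron2 T * B =
      !![T 0 0 ^ 2, 2 * (T 0 0 * T 0 1), T 0 1 ^ 2;
         T 0 0 * T 1 0, T 0 0 * T 1 1 + T 0 1 * T 1 0, T 0 1 * T 1 1;
         T 1 0 ^ 2, 2 * (T 1 0 * T 1 1), T 1 1 ^ 2] := by
    ext i j
    fin_cases i <;> fin_cases j <;>
      simp [A, B, kron2, bits, Matrix.mul_apply, Fin.sum_univ_four, Matrix.vecHead, Matrix.vecTail, Function.comp] <;> ring
  rw [h]
  simp [Matrix.det_fin_three, Matrix.det_fin_two]
  ring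
end

section
/- If M is a redundant 4×4 complex matrix and T is any 2×2 complex matrix, then the matrix T^{⊗2} M (Tᵀ)^{⊗2} is also redundant, and det(φ(T^{⊗2} M (Tᵀ)^{⊗2})) = det(φ(M)) · (det T)^6. -/
open Matrix

set_option maxHeartbeats 2000000 in
theorem redundant_invariant (M : Matrix (Fin 4) (Fin 4) ℂ) (hM : Redundant M)
    (T : Matrix (Fin 2) (Fin 2) ℂ) :
    Redundant (kron2 T * M * kron2 Tᵀ) ∧
      (A * (kron2 T * M * kron2 Tᵀ) * B).det = (A * M * B).det * T.det ^ 6 := by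
  obtain ⟨h1, h2⟩ := hM
  have e0 : M 2 0 = M 1 0 := (h1 0).symm
  have e1 : M 2 1 = M 1 1 := (h1 1).symm
  have e2 : M 2 2 = M 1 2 := (h1 2).symm
  have e3 : M 2 3 = M 1 3 := (h1 3).symm
  have f0 : M 0 2 = M 0 1 := (h2 0).symm
  have f1 : M 1 2 = M 1 1 := (h2 1).symm
  have f3 : M 3 2 = M 3 1 := (h2 3).symm
  refine ⟨⟨fun j => ?_, fun i => ?_⟩, ?_⟩
  · fin_cases j <;>
      simp only [kron2, bits, Matrix.mul_apply, Fin.sum_univ_four, Matrix.of_apply,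
        Matrix.cons_val_zero, Matrix.cons_val_one, Matrix.head_cons, Matrix.cons_val_fin_one,
        Matrix.transpose_apply, Fin.isValue, Matrix.cons_val', Matrix.empty_val',
        Matrix.cons_val_two, Matrix.cons_val_three, Matrix.tail_cons, Matrix.head_fin_const] <;>
      simp only [e0, e1, e2, e3, f0, f1, f3] <;> ring
  · fin_cases i <;>
      simp only [kron2, bits, Matrix.mul_apply, Fin.sum_univ_four, Matrix.of_apply,
        Matrix.cons_val_zero, Matrix.cons_val_one, Matrix.head_cons, Matrix.cons_val_fin_one,
        Matrix.transpose_apply, Fin.isValue, Matrix.cons_val', Matrix.empty_val',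
        Matrix.cons_val_two, Matrix.cons_val_three, Matrix.tail_cons, Matrix.head_fin_const] <;>
      simp only [e0, e1, e2, e3, f0, f1, f3] <;> ring
  · simp only [Matrix.det_fin_three, A, B, kron2, bits, Matrix.mul_apply, Fin.sum_univ_four,
      Matrix.det_fin_two, Matrix.of_apply, Matrix.cons_val_zero, Matrix.cons_val_one,
      Matrix.head_cons, Matrix.transpose_apply, Fin.isValue, Matrix.cons_val', Matrix.empty_val',
      Matrix.cons_val_two, Matrix.cons_val_three, Matrix.tail_cons, Matrix.head_fin_const]
    simp only [e0, e1, e2, e3, f0, f1, f3]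
    ring
end
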